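/- Let R be a finite set with a laminar family Σ of subsets (any two members disjoint or nested) containing R, and suppose nonnegative integers γ(S) are assigned to all S ∈ Σ such that: γ(S) ≤ ⌊(|S|-1)/2⌋ for all S, γ(R) = g where |R| ∈ {2g+1, 2g+2}, and γ(S') ≥ Σ_{T child of S'} γ(T) for all S'. If additionally whenever γ(S) < ⌊(|S|-1)/2⌋ for some S ≠ R with parent S', one has γ(S') = Σ_{T child of S'} γ(T), then γ(S) = ⌊(|S|-1)/2⌋ for all S ∈ Σ. -/

import Mathlib

/-- Auxiliary: sum of `f i - 1` is at most `(sum of f i) - 1` (truncated subtraction). -/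
lemma sum_sub_one_le {ι : Type*} (s : Finset ι) (f : ι → ℕ) :
    ∑ i ∈ s, (f i - 1) ≤ (∑ i ∈ s, f i) - 1 := by
  classical
  induction s using Finset.induction_on with
  | empty => simp
  | insert _ _ ha ih =>
    rw [Finset.sum_insert ha, Finset.sum_insert ha]
    omega

/-- abstraction of the induction in Lemma 4.2.  `Sig` is a laminar
family on `R` containing `R`; `parent S` is the smallest member of `Sig` strictly
containing `S` (for `S ≠ R`); the children of `S'` are the members whose parent is
`S'`.  Under the listed hypotheses on `γ`, one gets `γ S = ⌊(|S|-1)/2⌋` for all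
`S ∈ Sig`. -/
theorem stmt_8 {α : Type*} [DecidableEq α] (R : Finset α) (Sig : Finset (Finset α))
    (hR : R ∈ Sig)
    (hsub : ∀ S ∈ Sig, S ⊆ R)
    (hlam : ∀ S ∈ Sig, ∀ T ∈ Sig, Disjoint S T ∨ S ⊆ T ∨ T ⊆ S)
    (g : ℕ)
    (parent : Finset α → Finset α)
    (hpar_mem : ∀ S ∈ Sig, S ≠ R → parent S ∈ Sig)
    (hpar_ssub : ∀ S ∈ Sig, S ≠ R → S ⊂ parent S)
    (hpar_min : ∀ S ∈ Sig, S ≠ R → ∀ T ∈ Sig, S ⊂ T → parent S ⊆ T)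
    (γ : Finset α → ℕ)
    (hbound : ∀ S ∈ Sig, γ S ≤ (S.card - 1) / 2)
    (hγR : γ R = g)
    (hRcard : R.card = 2 * g + 1 ∨ R.card = 2 * g + 2)
    (hsup : ∀ S' ∈ Sig,
      (∑ T ∈ Sig.filter (fun T => T ≠ R ∧ parent T = S'), γ T) ≤ γ S')
    (hstrict : ∀ S ∈ Sig, S ≠ R → γ S < (S.card - 1) / 2 →
      γ (parent S) = ∑ T ∈ Sig.filter (fun T => T ≠ R ∧ parent T = parent S), γ T) :
    ∀ S ∈ Sig, γ S = (S.card - 1) / 2 := by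
  have hγRval : γ R = (R.card - 1) / 2 := by omega
  suffices H : ∀ k, ∀ S ∈ Sig, R.card - S.card ≤ k → γ S = (S.card - 1) / 2 by
    exact fun S hS => H R.card S hS (by omega)
  intro k
  induction k with
  | zero =>
    intro S hS hk
    have hSR : S = R := Finset.eq_of_subset_of_card_le (hsub S hS) (by omega)
    rw [hSR]; exact hγRval
  | succ k ih =>
    intro S hS hk
    by_cases hSR : S = R
    · rw [hSR]; exact hγRval
    refine le_antisymm (hbound S hS) ?_
    by_contra hlt
    have hlt' : γ S < (S.card - 1) / 2 := lt_of_not_ge hlt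
    have hS' : parent S ∈ Sig := hpar_mem S hS hSR
    have hss : S ⊂ parent S := hpar_ssub S hS hSR
    have heq := hstrict S hS hSR hlt'
    set S' := parent S with hS'def
    set C := Sig.filter (fun T => T ≠ R ∧ parent T = S') with hCdef
    have hmemC : ∀ T ∈ C, T ∈ Sig ∧ T ≠ R ∧ parent T = S' := by
      intro T hT
      simpa [hCdef] using (Finset.mem_filter.1 hT)
    have hSC : S ∈ C := by
      simp [hCdef, Finset.mem_filter, hS, hSR]
      exact hS'def.symm
    -- children are pairwise disjoint
    have hCdisj : (C : Set (Finset α)).PairwiseDisjoint id := by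
      intro T1 hT1 T2 hT2 hne
      obtain ⟨hT1S, hT1R, hT1P⟩ := hmemC T1 hT1
      obtain ⟨hT2S, hT2R, hT2P⟩ := hmemC T2 hT2
      rcases hlam T1 hT1S T2 hT2S with h | h | h
      · exact h
      · exfalso
        have hss12 : T1 ⊂ T2 := ssubset_of_subset_of_ne h hne
        have := hpar_min T1 hT1S hT1R T2 hT2S hss12
        rw [hT1P] at this
        have hT2ss : T2 ⊂ S' := by rw [← hT2P]; exact hpar_ssub T2 hT2S hT2R
        exact absurd (this.antisymm hT2ss.subset) hT2ss.ne'
      · exfalso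
        have hss21 : T2 ⊂ T1 := ssubset_of_subset_of_ne h (Ne.symm hne)
        have := hpar_min T2 hT2S hT2R T1 hT1S hss21
        rw [hT2P] at this
        have hT1ss : T1 ⊂ S' := by rw [← hT1P]; exact hpar_ssub T1 hT1S hT1R
        exact absurd (this.antisymm hT1ss.subset) hT1ss.ne'
    have hsum_card : ∑ T ∈ C, T.card ≤ S'.card := by
      have hbu : ∑ T ∈ C, T.card = (C.biUnion id).card :=
        (Finset.card_biUnion (fun x hx y hy hxy => hCdisj hx hy hxy)).symm
      rw [hbu]
      apply Finset.card_le_card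
      intro a ha
      obtain ⟨T, hT, haT⟩ := Finset.mem_biUnion.1 ha
      obtain ⟨hTS, hTR, hTP⟩ := hmemC T hT
      have : T ⊂ S' := by rw [← hTP]; exact hpar_ssub T hTS hTR
      exact this.subset haT
    have hstrictsum : γ S' < ∑ T ∈ C, (T.card - 1) / 2 := by
      rw [heq]
      exact Finset.sum_lt_sum (fun T hT => hbound T (hmemC T hT).1) ⟨S, hSC, hlt'⟩
    have h2 : 2 * ∑ T ∈ C, (T.card - 1) / 2 ≤ ∑ T ∈ C, (T.card - 1) := by
      rw [Finset.mul_sum]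
      exact Finset.sum_le_sum fun T _ => by omega
    have hsub1 : ∑ T ∈ C, (T.card - 1) ≤ (∑ T ∈ C, T.card) - 1 :=
      sum_sub_one_le C _
    have hfin : ∑ T ∈ C, (T.card - 1) / 2 ≤ (S'.card - 1) / 2 := by
      rw [Nat.le_div_iff_mul_le (by norm_num)]
      omega
    have hγS' : γ S' < (S'.card - 1) / 2 := lt_of_lt_of_le hstrictsum hfin
    have hcard : S.card < S'.card := Finset.card_lt_card hss
    have hcardR : S'.card ≤ R.card := Finset.card_le_card (hsub S' hS')
    have := ih S' hS' (by omega)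
    omega
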